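/- Let 2 ≤ r ≤ n be integers and let (s₂, …, s_r) be a fixed (r−1)-tuple of positive integers. Then there exists an integer M (depending on (s₂, …, s_r) and n) such that for every positive integer s₁ > M, the multiple harmonic sum H_n(s₁, s₂, …, s_r) is not an integer. -/

import Mathlib

def mhs (n r : ℕ) (s : Fin r → ℕ) : ℚ :=
  ∑ k ∈ Finset.univ.filter (fun k : Fin r → Fin n => ∀ i j : Fin r, i < j → k i < k j),
    ∏ i, (1 : ℚ) / ((k i : ℕ) + 1 : ℚ) ^ s i

private lemma fin_chain {m n : ℕ} (k : Fin m → Fin n)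
    (hk : ∀ i j : Fin m, i < j → k i < k j) :
    ∀ (d v : ℕ) (h : v + d < m) (h' : v < m),
      d + (k ⟨v, h'⟩ : ℕ) ≤ (k ⟨v + d, h⟩ : ℕ) := by
  intro d
  induction d with
  | zero => intro v h h'; simp
  | succ d ih =>
    intro v h h'
    have h1 : v + d < m := by omega
    have h2 := ih v h1 h'
    have h3 : k ⟨v + d, h1⟩ < k ⟨v + (d+1), h⟩ := hk _ _ (by simp [Fin.lt_def])
    have h4 := Fin.lt_def.mp h3
    omega

private lemma fin_lower {m n : ℕ} (k : Fin (m+1) → Fin n)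
    (hk : ∀ i j : Fin (m+1), i < j → k i < k j) (i : Fin (m+1)) :
    (i : ℕ) + (k 0 : ℕ) ≤ (k i : ℕ) := by
  have := fin_chain k hk i.val 0 (by omega) (by omega)
  simpa only [Nat.zero_add, Fin.eta, Fin.mk_zero] using this

private lemma fin_upper {m n : ℕ} (k : Fin (m+1) → Fin n)
    (hk : ∀ i j : Fin (m+1), i < j → k i < k j) (i : Fin (m+1)) :
    (m - (i : ℕ)) + (k i : ℕ) ≤ (k (Fin.last m) : ℕ) := by
  have h := fin_chain k hk (m - i.val) i.val (by omega) i.isLt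
  have he : (⟨(i:ℕ) + (m - (i:ℕ)), by omega⟩ : Fin (m+1)) = Fin.last m := by
    apply Fin.ext
    simp [Fin.last]
    omega
  rw [he] at h
  simpa only [Fin.eta] using h

private lemma term_pos {n m : ℕ} (k : Fin m → Fin n) (s : Fin m → ℕ) :
    0 < ∏ i, (1:ℚ) / ((k i : ℕ) + 1 : ℚ) ^ s i :=
  Finset.prod_pos (fun i _ => by positivity)

private lemma term_le_one {n m : ℕ} (k : Fin m → Fin n) (s : Fin m → ℕ) :
    ∏ i, (1:ℚ) / ((k i : ℕ) + 1 : ℚ) ^ s i ≤ 1 := by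
  apply Finset.prod_le_one
  · intro i _; positivity
  · intro i _
    rw [div_le_one (by positivity)]
    apply one_le_pow₀
    have : (0:ℚ) ≤ ((k i : ℕ) : ℚ) := by positivity
    linarith

private lemma mhs_split (n r : ℕ) (s₁ : ℕ) (s' : Fin r → ℕ) :
    mhs n (r+1) (Fin.cons s₁ s') =
      (∑ k ∈ (Finset.univ.filter (fun k : Fin (r+1) → Fin n =>
          ∀ i j : Fin (r+1), i < j → k i < k j)).filter (fun k => (k 0 : ℕ) = 0),
        ∏ i : Fin r, (1:ℚ) / ((k i.succ : ℕ) + 1 : ℚ) ^ s' i)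
      + ∑ k ∈ (Finset.univ.filter (fun k : Fin (r+1) → Fin n =>
          ∀ i j : Fin (r+1), i < j → k i < k j)).filter (fun k => ¬ (k 0 : ℕ) = 0),
        ∏ i, (1:ℚ) / ((k i : ℕ) + 1 : ℚ) ^ (Fin.cons s₁ s' i) := by
  classical
  rw [mhs, ← Finset.sum_filter_add_sum_filter_not _ (fun k => (k 0 : ℕ) = 0)]
  congr 1
  apply Finset.sum_congr rfl
  intro k hk
  have hk0 : (k 0 : ℕ) = 0 := (Finset.mem_filter.mp hk).2
  rw [Fin.prod_univ_succ]
  simp [hk0, Fin.cons_succ]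

set_option maxHeartbeats 1000000 in
theorem exists_bound_first_exponent (r n : ℕ) (hr : 1 ≤ r) (hn : r + 1 ≤ n)
    (s' : Fin r → ℕ) (hs' : ∀ i, 0 < s' i) :
    ∃ M : ℤ, ∀ s₁ : ℕ, 0 < s₁ → M < (s₁ : ℤ) →
      ¬∃ m : ℤ, mhs n (r + 1) (Fin.cons s₁ s') = (m : ℚ) := by
  classical
  obtain ⟨T, hTdef⟩ : ∃ T : Finset (Fin (r+1) → Fin n),
      T = Finset.univ.filter (fun k => ∀ i j : Fin (r+1), i < j → k i < k j) := ⟨_, rfl⟩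
  obtain ⟨T₀, hT0def⟩ : ∃ T₀ : Finset (Fin (r+1) → Fin n),
      T₀ = T.filter (fun k => (k 0 : ℕ) = 0) := ⟨_, rfl⟩
  obtain ⟨T₁, hT1def⟩ : ∃ T₁ : Finset (Fin (r+1) → Fin n),
      T₁ = T.filter (fun k => ¬ (k 0 : ℕ) = 0) := ⟨_, rfl⟩
  have hmemT : ∀ k, k ∈ T ↔ ∀ i j : Fin (r+1), i < j → k i < k j := by
    intro k; simp [hTdef]
  obtain ⟨A, hAdef⟩ : ∃ A : ℚ,
      A = ∑ k ∈ T₀, ∏ i : Fin r, (1:ℚ) / ((k i.succ : ℕ) + 1 : ℚ) ^ s' i := ⟨_, rfl⟩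
  have hsplit : ∀ s₁ : ℕ, mhs n (r+1) (Fin.cons s₁ s')
      = A + ∑ k ∈ T₁, ∏ i, (1:ℚ) / ((k i : ℕ) + 1 : ℚ) ^ (Fin.cons s₁ s' i) := by
    intro s₁
    have h := mhs_split n r s₁ s'
    rw [← hTdef, ← hT0def, ← hT1def, ← hAdef] at h
    exact h
  -- the canonical element of T₀
  have hkid : (fun i : Fin (r+1) => Fin.castLE hn i) ∈ T₀ := by
    rw [hT0def, Finset.mem_filter]
    refine ⟨(hmemT _).mpr ?_, ?_⟩
    · intro i j hij
      rw [Fin.lt_def]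
      simp only [Fin.coe_castLE]
      exact hij
    · show ((Fin.castLE hn 0 : Fin n) : ℕ) = 0
      simp only [Fin.coe_castLE, Fin.val_zero]
  have hApos : 0 < A := by
    rw [hAdef]
    exact Finset.sum_pos (fun k _ => term_pos (fun i => k i.succ) s') ⟨_, hkid⟩
  rcases eq_or_lt_of_le hn with hc | hc
  · -- case n = r + 1 : the sum is constant, equal to A ∈ (0,1)
    have hT1empty : T₁ = ∅ := by
      rw [hT1def, Finset.eq_empty_iff_forall_notMem]
      intro k hk
      rw [Finset.mem_filter] at hk
      obtain ⟨hkT, hne⟩ := hk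
      have hmono := (hmemT k).mp hkT
      have hlow := fin_lower k hmono (Fin.last r)
      have hlt : (k (Fin.last r) : ℕ) < n := (k _).isLt
      have hlast : ((Fin.last r : Fin (r+1)) : ℕ) = r := rfl
      omega
    have hT0sub : T₀ ⊆ {fun i : Fin (r+1) => Fin.castLE hn i} := by
      intro k hk
      rw [hT0def, Finset.mem_filter] at hk
      obtain ⟨hkT, hk0⟩ := hk
      have hmono := (hmemT k).mp hkT
      rw [Finset.mem_singleton]
      funext i
      apply Fin.ext
      have hlow := fin_lower k hmono i
      have hup := fin_upper k hmono i
      have hlt : (k (Fin.last r) : ℕ) < n := (k _).isLt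
      have hiv : (i : ℕ) < r + 1 := i.isLt
      simp only [Fin.coe_castLE]
      omega
    have hT0eq : T₀ = {fun i : Fin (r+1) => Fin.castLE hn i} :=
      (Finset.Nonempty.subset_singleton_iff ⟨_, hkid⟩).mp hT0sub
    haveI hnz : NeZero r := ⟨by omega⟩
    have hAle : A ≤ 1/2 := by
      rw [hAdef, hT0eq, Finset.sum_singleton]
      rw [← Finset.mul_prod_erase _ _ (Finset.mem_univ (0 : Fin r))]
      have h1 : ((Fin.castLE hn (0 : Fin r).succ : Fin n) : ℕ) = ((0 : Fin r) : ℕ) + 1 := by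
        rw [Fin.coe_castLE, Fin.val_succ]
      have h2 : (1:ℚ) / (((Fin.castLE hn (0 : Fin r).succ : Fin n) : ℕ) + 1 : ℚ) ^ s' 0
          ≤ 1/2 := by
        rw [h1]
        have hz : (((0 : Fin r) : ℕ) : ℚ) = 0 := by norm_cast
        push_cast
        rw [hz]
        have h2s : (2:ℚ) ≤ (0+1+1) ^ s' 0 := by
          calc (2:ℚ) = (0+1+1)^1 := by norm_num
          _ ≤ (0+1+1)^ s' 0 := by
            apply pow_le_pow_right₀ (by norm_num) (hs' 0)
        rw [div_le_div_iff₀ (by positivity) (by norm_num)]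
        linarith
      have h3 : ∏ i ∈ Finset.univ.erase (0 : Fin r),
          (1:ℚ) / (((Fin.castLE hn i.succ : Fin n) : ℕ) + 1 : ℚ) ^ s' i ≤ 1 := by
        apply Finset.prod_le_one
        · intro i _; positivity
        · intro i _
          rw [div_le_one (by positivity)]
          apply one_le_pow₀
          have : (0:ℚ) ≤ (((Fin.castLE hn i.succ : Fin n) : ℕ) : ℚ) := by positivity
          linarith
      have h4 := mul_le_mul h2 h3 (Finset.prod_nonneg (fun i _ => by positivity)) (by norm_num)
      rw [mul_one] at h4
      exact h4
    refine ⟨0, fun s₁ hs1 hM => ?_⟩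
    rintro ⟨m, hm⟩
    rw [hsplit s₁, hT1empty] at hm
    simp only [Finset.sum_empty, add_zero] at hm
    have h1 : (0:ℚ) < m := by rw [← hm]; exact hApos
    have h2 : (m:ℚ) < 1 := by rw [← hm]; linarith
    have h1' : (0:ℤ) < m := by exact_mod_cast h1
    have h2' : m < 1 := by exact_mod_cast h2
    omega
  · -- case r + 1 < n
    have hk1 : (fun i : Fin (r+1) => (⟨(i:ℕ)+1, by omega⟩ : Fin n)) ∈ T₁ := by
      rw [hT1def, Finset.mem_filter]
      refine ⟨(hmemT _).mpr ?_, by simp⟩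
      intro i j hij
      rw [Fin.lt_def]
      have := Fin.lt_def.mp hij
      simp only
      omega
    have hT1ne : T₁.Nonempty := ⟨_, hk1⟩
    have hCpos : 0 < (T₁.card : ℚ) := by
      have := Finset.card_pos.mpr hT1ne
      exact_mod_cast this
    have hBpos : ∀ s₁ : ℕ, 0 < ∑ k ∈ T₁, ∏ i, (1:ℚ) / ((k i : ℕ) + 1 : ℚ) ^ (Fin.cons s₁ s' i) :=
      fun s₁ => Finset.sum_pos (fun k _ => term_pos k (Fin.cons s₁ s')) hT1ne
    have hBle : ∀ s₁ : ℕ, (∑ k ∈ T₁, ∏ i, (1:ℚ) / ((k i : ℕ) + 1 : ℚ) ^ (Fin.cons s₁ s' i))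
        ≤ (T₁.card : ℚ) * (1/2)^s₁ := by
      intro s₁
      have hb : ∀ k ∈ T₁, (∏ i, (1:ℚ) / ((k i : ℕ) + 1 : ℚ) ^ (Fin.cons s₁ s' i)) ≤ (1/2)^s₁ := by
        intro k hk
        rw [hT1def, Finset.mem_filter] at hk
        obtain ⟨hkT, hne0⟩ := hk
        rw [Fin.prod_univ_succ]
        simp only [Fin.cons_zero, Fin.cons_succ]
        have hk01 : (1:ℕ) ≤ (k 0 : ℕ) := by omega
        have hf0 : (1:ℚ) / (((k 0 : ℕ) : ℚ) + 1) ^ s₁ ≤ (1/2)^s₁ := by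
          rw [div_pow, one_pow]
          apply div_le_div_of_nonneg_left (by norm_num) (by positivity)
          apply pow_le_pow_left₀ (by norm_num)
          have : (1:ℚ) ≤ ((k 0 : ℕ) : ℚ) := by exact_mod_cast hk01
          linarith
        have hrest : (∏ i : Fin r, (1:ℚ) / (((k i.succ : ℕ) : ℚ) + 1) ^ s' i) ≤ 1 :=
          term_le_one (fun i => k i.succ) s'
        have h4 := mul_le_mul hf0 hrest (Finset.prod_nonneg (fun i _ => by positivity))
          (by positivity)
        rw [mul_one] at h4
        exact h4
      have h1 : (∑ k ∈ T₁, ∏ i, (1:ℚ) / ((k i : ℕ) + 1 : ℚ) ^ (Fin.cons s₁ s' i))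
          ≤ ∑ _k ∈ T₁, ((1:ℚ)/2)^s₁ := Finset.sum_le_sum hb
      rw [Finset.sum_const, nsmul_eq_mul] at h1
      exact h1
    obtain ⟨δ, hδdef⟩ : ∃ δ : ℚ, δ = (⌊A⌋ : ℚ) + 1 - A := ⟨_, rfl⟩
    have hδpos : 0 < δ := by
      have := Int.lt_floor_add_one A
      rw [hδdef]; linarith
    refine ⟨⌈(T₁.card : ℚ) / δ⌉, fun s₁ hs1 hM => ?_⟩
    rintro ⟨m, hm⟩
    rw [hsplit s₁] at hm
    have hs1Q : (0:ℚ) < (s₁ : ℚ) := by exact_mod_cast hs1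
    have hcd : (T₁.card : ℚ) / δ < (s₁ : ℚ) := by
      have h1 : ((⌈(T₁.card : ℚ) / δ⌉ : ℤ) : ℚ) < ((s₁:ℤ) : ℚ) := by exact_mod_cast hM
      have h2 := Int.le_ceil ((T₁.card : ℚ) / δ)
      push_cast at h1
      linarith
    have hCs : (T₁.card : ℚ) / (s₁ : ℚ) < δ := by
      rw [div_lt_iff₀ hs1Q]
      rw [div_lt_iff₀ hδpos] at hcd
      rw [mul_comm]
      exact hcd
    have hpow : ((1:ℚ)/2)^s₁ ≤ 1 / (s₁ : ℚ) := by
      rw [div_pow, one_pow]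
      apply div_le_div_of_nonneg_left (by norm_num) hs1Q
      have h2 : (s₁ : ℚ) ≤ ((2:ℕ)^s₁ : ℕ) := by
        exact_mod_cast le_of_lt (Nat.lt_two_pow_self (n := s₁))
      push_cast at h2
      linarith
    have hBδ : (∑ k ∈ T₁, ∏ i, (1:ℚ) / ((k i : ℕ) + 1 : ℚ) ^ (Fin.cons s₁ s' i)) < δ := by
      have hx1 := hBle s₁
      have hx2 : (T₁.card : ℚ) * (1/2)^s₁ ≤ (T₁.card : ℚ) * (1 / (s₁:ℚ)) :=
        mul_le_mul_of_nonneg_left hpow (le_of_lt hCpos)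
      have hx3 : (T₁.card : ℚ) * (1 / (s₁:ℚ)) = (T₁.card : ℚ) / (s₁:ℚ) := by ring
      linarith
    have hfl : (⌊A⌋ : ℚ) ≤ A := Int.floor_le A
    have h5 : (⌊A⌋ : ℚ) < (m : ℚ) := by
      have := hBpos s₁
      linarith
    have h6 : (m:ℚ) < (⌊A⌋ : ℚ) + 1 := by
      rw [hδdef] at hBδ
      linarith
    have h5' : ⌊A⌋ < m := by exact_mod_cast h5
    have h6' : m < ⌊A⌋ + 1 := by exact_mod_cast h6
    omega
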